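/- Let B be an n×n real matrix all of whose complex eigenvalues have strictly negative real part. Then the matrix exponential exp(tB) tends to the zero matrix as t → ∞; consequently, for every fixed x₀ ∈ ℝⁿ, exp(tB)x₀ → 0 as t → ∞. -/

import Mathlib

open Filter Matrix NormedSpace
open scoped Topology NNReal

section Auxiliary

open Module ENNReal


lemma aux_mulVec_exp_of_eigen {n : ℕ} (A : Matrix (Fin n) (Fin n) ℂ) {x : Fin n → ℂ} {μ : ℂ}
    (hx : A.mulVec x = μ • x) :
    (exp A).mulVec x = Complex.exp μ • x := by
  letI : SeminormedRing (Matrix (Fin n) (Fin n) ℂ) := Matrix.linftyOpSemiNormedRing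
  letI : NormedRing (Matrix (Fin n) (Fin n) ℂ) := Matrix.linftyOpNormedRing
  letI : NormedAlgebra ℂ (Matrix (Fin n) (Fin n) ℂ) := Matrix.linftyOpNormedAlgebra
  have hpow : ∀ k : ℕ, (A ^ k).mulVec x = μ ^ k • x := by
    intro k
    induction k with
    | zero => simp [Matrix.one_mulVec]
    | succ k ih =>
        rw [pow_succ', ← Matrix.mulVec_mulVec, ih, Matrix.mulVec_smul, hx, smul_smul,
          ← pow_succ]
  have hL : Continuous (fun M : Matrix (Fin n) (Fin n) ℂ => M.mulVec x) :=
    continuous_id.matrix_mulVec continuous_const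
  let L : Matrix (Fin n) (Fin n) ℂ →L[ℂ] (Fin n → ℂ) :=
    { toFun := fun M => M.mulVec x
      map_add' := fun M N => Matrix.add_mulVec M N x
      map_smul' := fun c M => Matrix.smul_mulVec c M x
      cont := hL }
  have h1 : HasSum (fun k : ℕ => (((Nat.factorial k : ℂ))⁻¹ • A ^ k)) (exp A) := by
    rw [exp_eq_tsum ℂ]
    exact (expSeries_summable' (𝕂 := ℂ) A).hasSum
  have h2 := h1.mapL L
  have h2' : HasSum (fun k : ℕ => (((Nat.factorial k : ℂ))⁻¹ * μ ^ k) • x) ((exp A).mulVec x) := by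
    refine h2.congr_fun fun k => (?_ : L _ = _).symm
    show ((Nat.factorial k : ℂ)⁻¹ • A ^ k).mulVec x = _
    rw [Matrix.smul_mulVec, hpow, smul_smul]
  have h3 : HasSum (fun k : ℕ => (((Nat.factorial k : ℂ))⁻¹ • μ ^ k)) (exp μ) := by
    rw [exp_eq_tsum ℂ]
    exact (expSeries_summable' (𝕂 := ℂ) μ).hasSum
  have h4 : HasSum (fun k : ℕ => (((Nat.factorial k : ℂ))⁻¹ * μ ^ k) • x) (Complex.exp μ • x) := by
    rw [Complex.exp_eq_exp_ℂ]
    exact h3.smul_const x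
  exact h2'.unique h4

lemma aux_spectrum_exp_subset {n : ℕ} (A : Matrix (Fin n) (Fin n) ℂ) {μ : ℂ}
    (hμ : μ ∈ spectrum ℂ (exp A)) : ∃ l ∈ spectrum ℂ A, μ = Complex.exp l := by
  letI : SeminormedRing (Matrix (Fin n) (Fin n) ℂ) := Matrix.linftyOpSemiNormedRing
  letI : NormedRing (Matrix (Fin n) (Fin n) ℂ) := Matrix.linftyOpNormedRing
  letI : NormedAlgebra ℂ (Matrix (Fin n) (Fin n) ℂ) := Matrix.linftyOpNormedAlgebra
  set g : End ℂ (Fin n → ℂ) := Matrix.toLinAlgEquiv' (exp A) with hg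
  set f : End ℂ (Fin n → ℂ) := Matrix.toLinAlgEquiv' A with hf
  have hμ' : μ ∈ spectrum ℂ g := by
    rwa [AlgEquiv.spectrum_eq]
  have hev : End.HasEigenvalue g μ := End.hasEigenvalue_iff_mem_spectrum.mpr hμ'
  set E : Submodule ℂ (Fin n → ℂ) := End.eigenspace g μ with hE
  have hEbot : E ≠ ⊥ := hev
  haveI : Nontrivial E := Submodule.nontrivial_iff_ne_bot.mpr hEbot
  have hcomm : f * g = g * f := by
    have h1 : Commute A (exp A) := (Commute.refl A).exp_right
    have := h1.map (Matrix.toLinAlgEquiv' (R := ℂ) (n := Fin n)).toAlgHom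
    exact this
  have hstab : ∀ v ∈ E, f v ∈ E := by
    intro v hv
    rw [hE, End.mem_eigenspace_iff] at hv ⊢
    calc g (f v) = (g * f) v := rfl
    _ = (f * g) v := by rw [hcomm]
    _ = f (g v) := rfl
    _ = f (μ • v) := by rw [hv]
    _ = μ • f v := map_smul f μ v
  set f' : End ℂ E := LinearMap.restrict f hstab with hf'
  obtain ⟨l, hl⟩ := End.exists_eigenvalue f'
  obtain ⟨v, hv⟩ := hl.exists_hasEigenvector
  have hx0 : (v : Fin n → ℂ) ≠ 0 := fun h => hv.2 (Subtype.coe_injective (by simpa using h))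
  have hfx : f (v : Fin n → ℂ) = l • (v : Fin n → ℂ) := by
    have := hv.apply_eq_smul
    have h2 : ((f' v : E) : Fin n → ℂ) = ((l • v : E) : Fin n → ℂ) := by rw [this]
    simpa [hf', LinearMap.restrict_apply] using h2
  have hmul : A.mulVec (v : Fin n → ℂ) = l • (v : Fin n → ℂ) := by
    simpa [hf, Matrix.toLinAlgEquiv'_apply] using hfx
  have hlspec : l ∈ spectrum ℂ A := by
    rw [← AlgEquiv.spectrum_eq (Matrix.toLinAlgEquiv' (R := ℂ) (n := Fin n)) A]
    exact End.hasEigenvalue_iff_mem_spectrum.mp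
      (End.hasEigenvalue_of_hasEigenvector ⟨End.mem_eigenspace_iff.mpr hfx, hx0⟩)
  refine ⟨l, hlspec, ?_⟩
  have hgx : (exp A).mulVec (v : Fin n → ℂ) = μ • (v : Fin n → ℂ) := by
    have := End.mem_eigenspace_iff.mp v.2
    simpa [hg, Matrix.toLinAlgEquiv'_apply] using this
  have := aux_mulVec_exp_of_eigen A hmul
  rw [hgx] at this
  have hsub : (μ - Complex.exp l) • (v : Fin n → ℂ) = 0 := by
    rw [sub_smul, this, sub_self]
  rcases smul_eq_zero.mp hsub with h | h
  · exact (sub_eq_zero.mp h)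
  · exact absurd h hx0

lemma aux_tendsto_pow_of_spectralRadius_lt_one {𝔸 : Type*} [NormedRing 𝔸] [NormedAlgebra ℂ 𝔸]
    [CompleteSpace 𝔸] (a : 𝔸) (h : spectralRadius ℂ a < 1) :
    Tendsto (fun m : ℕ => a ^ m) atTop (𝓝 0) := by
  obtain ⟨r, hr1, hr2⟩ := exists_between h
  -- r : ℝ≥0∞, spectralRadius < r < 1
  have hrt : r ≠ ⊤ := (hr2.trans one_lt_top).ne
  have hgel := spectrum.pow_nnnorm_pow_one_div_tendsto_nhds_spectralRadius a
  have hev : ∀ᶠ m : ℕ in atTop, (‖a ^ m‖₊ : ℝ≥0∞) ^ (1 / m : ℝ) < r :=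
    hgel.eventually_lt_const hr1
  -- convert to ‖a ^ m‖₊ ≤ r ^ m for m ≥ 1
  have hev2 : ∀ᶠ m : ℕ in atTop, (‖a ^ m‖₊ : ℝ≥0∞) ≤ r ^ (m : ℕ) := by
    filter_upwards [hev, eventually_ge_atTop 1] with m hm hm1
    have hm0 : (m : ℝ) ≠ 0 := by positivity
    rw [one_div] at hm
    calc (‖a ^ m‖₊ : ℝ≥0∞) = ((‖a ^ m‖₊ : ℝ≥0∞) ^ ((m : ℝ)⁻¹)) ^ (m : ℝ) := by
          rw [← ENNReal.rpow_mul, inv_mul_cancel₀ hm0, ENNReal.rpow_one]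
    _ ≤ r ^ (m : ℝ) := ENNReal.rpow_le_rpow hm.le (by positivity)
    _ = r ^ (m : ℕ) := by rw [← ENNReal.rpow_natCast]
  -- now norms
  set s : ℝ≥0 := r.toNNReal with hs
  have hsr : (s : ℝ≥0∞) = r := ENNReal.coe_toNNReal hrt
  have hs1 : (s : ℝ) < 1 := by
    have : (s : ℝ≥0∞) < 1 := hsr ▸ hr2
    exact_mod_cast this
  have hev3 : ∀ᶠ m : ℕ in atTop, ‖a ^ m‖ ≤ (s : ℝ) ^ m := by
    filter_upwards [hev2] with m hm
    have : (‖a ^ m‖₊ : ℝ≥0∞) ≤ ((s ^ m : ℝ≥0) : ℝ≥0∞) := by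
      rw [ENNReal.coe_pow, hsr]; exact hm
    have h2 : ‖a ^ m‖₊ ≤ s ^ m := by exact_mod_cast this
    calc ‖a ^ m‖ = (‖a ^ m‖₊ : ℝ) := rfl
    _ ≤ ((s ^ m : ℝ≥0) : ℝ) := by exact_mod_cast h2
    _ = (s : ℝ) ^ m := by push_cast; ring
  have hpow : Tendsto (fun m : ℕ => (s : ℝ) ^ m) atTop (𝓝 0) :=
    tendsto_pow_atTop_nhds_zero_of_lt_one s.coe_nonneg hs1
  have hnorm : Tendsto (fun m : ℕ => ‖a ^ m‖) atTop (𝓝 0) := by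
    refine squeeze_zero' (Eventually.of_forall fun m => norm_nonneg _) hev3 hpow
  exact tendsto_zero_iff_norm_tendsto_zero.mpr hnorm

lemma aux_complex {n : ℕ} (hn : n ≠ 0) (A : Matrix (Fin n) (Fin n) ℂ)
    (hA : ∀ μ ∈ spectrum ℂ A, μ.re < 0) (i j : Fin n) :
    Tendsto (fun t : ℝ => exp (t • A) i j) atTop (𝓝 0) := by
  letI : SeminormedRing (Matrix (Fin n) (Fin n) ℂ) := Matrix.linftyOpSemiNormedRing
  letI : NormedRing (Matrix (Fin n) (Fin n) ℂ) := Matrix.linftyOpNormedRing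
  letI : NormedAlgebra ℂ (Matrix (Fin n) (Fin n) ℂ) := Matrix.linftyOpNormedAlgebra
  letI : NormedAlgebra ℚ (Matrix (Fin n) (Fin n) ℂ) := Matrix.linftyOpNormedAlgebra
  haveI : Nonempty (Fin n) := ⟨⟨0, Nat.pos_of_ne_zero hn⟩⟩
  haveI : Nontrivial (Matrix (Fin n) (Fin n) ℂ) := inferInstance
  -- spectral radius of `exp A` is < 1
  have hrad : spectralRadius ℂ (exp A) < 1 := by
    have := spectrum.spectralRadius_lt_of_forall_lt_of_nonempty
      (spectrum.nonempty (exp A)) (r := 1) ?_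
    · simpa using this
    · intro k hk
      obtain ⟨l, hl, rfl⟩ := aux_spectrum_exp_subset A hk
      have h1 : ‖Complex.exp l‖ < 1 := by
        rw [Complex.norm_exp]
        exact Real.exp_lt_one_iff.mpr (hA l hl)
      exact_mod_cast h1
  have hpowm : Tendsto (fun m : ℕ => (exp A) ^ m) atTop (𝓝 0) :=
    aux_tendsto_pow_of_spectralRadius_lt_one (exp A) hrad
  -- uniform bound on `[0, 1]`
  have hcont : Continuous fun s : ℝ => exp (s • A) :=
    exp_continuous.comp (continuous_id.smul continuous_const)
  obtain ⟨M, hM⟩ := (isCompact_Icc (a := (0:ℝ)) (b := 1)).exists_bound_of_continuousOn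
    hcont.continuousOn
  -- key decomposition for `t ≥ 0`
  have key : ∀ t : ℝ, 0 ≤ t → ‖exp (t • A)‖ ≤ M * ‖(exp A) ^ ⌊t⌋₊‖ := by
    intro t ht
    have hs0 : 0 ≤ t - (⌊t⌋₊ : ℝ) := sub_nonneg.mpr (Nat.floor_le ht)
    have hs1 : t - (⌊t⌋₊ : ℝ) ≤ 1 := by
      have := Nat.lt_floor_add_one t
      linarith
    have hsplit : t • A = (t - (⌊t⌋₊ : ℝ)) • A + (⌊t⌋₊ : ℝ) • A := by
      rw [← add_smul]; ring_nf
    have hcomm : Commute ((t - (⌊t⌋₊ : ℝ)) • A) ((⌊t⌋₊ : ℝ) • A) :=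
      ((Commute.refl A).smul_left _).smul_right _
    have hexp : exp (t • A) = exp ((t - (⌊t⌋₊ : ℝ)) • A) * (exp A) ^ ⌊t⌋₊ := by
      rw [hsplit, exp_add_of_commute _ _ hcomm]
      congr 1
      rw [Nat.cast_smul_eq_nsmul ℝ, Matrix.exp_nsmul]
    rw [hexp]
    calc ‖exp ((t - (⌊t⌋₊ : ℝ)) • A) * (exp A) ^ ⌊t⌋₊‖
        ≤ ‖exp ((t - (⌊t⌋₊ : ℝ)) • A)‖ * ‖(exp A) ^ ⌊t⌋₊‖ := norm_mul_le _ _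
      _ ≤ M * ‖(exp A) ^ ⌊t⌋₊‖ := by
          refine mul_le_mul_of_nonneg_right ?_ (norm_nonneg _)
          exact hM _ ⟨hs0, hs1⟩
  -- squeeze
  have hnorm0 : Tendsto (fun m : ℕ => ‖(exp A) ^ m‖) atTop (𝓝 0) :=
    tendsto_zero_iff_norm_tendsto_zero.mp hpowm
  have hfloor : Tendsto (fun t : ℝ => ‖(exp A) ^ ⌊t⌋₊‖) atTop (𝓝 0) :=
    hnorm0.comp tendsto_nat_floor_atTop
  have h2 : Tendsto (fun t : ℝ => M * ‖(exp A) ^ ⌊t⌋₊‖) atTop (𝓝 0) := by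
    simpa using hfloor.const_mul M
  have hmain : Tendsto (fun t : ℝ => exp (t • A)) atTop (𝓝 0) := by
    apply tendsto_zero_iff_norm_tendsto_zero.mpr
    refine squeeze_zero' (Eventually.of_forall fun t => norm_nonneg _) ?_ h2
    filter_upwards [eventually_ge_atTop (0:ℝ)] with t ht using key t ht
  -- pass to entries
  let L : Matrix (Fin n) (Fin n) ℂ →ₗ[ℂ] ℂ :=
    { toFun := fun M => M i j
      map_add' := fun _ _ => rfl
      map_smul' := fun _ _ => rfl }
  have hLc : Continuous L := L.continuous_of_finiteDimensional
  have := (hLc.tendsto 0).comp hmain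
  exact this

end Auxiliary

/-- If every complex eigenvalue of the real matrix `B` has strictly
negative real part, then the matrix exponential `exp (t • B)` tends to the zero matrix
as `t → ∞`; consequently, for every fixed `x₀ ∈ ℝⁿ`, `exp (t • B) x₀ → 0` as `t → ∞`. -/
theorem matrix_exp_tendsto_zero_of_eigenvalues_neg_re
    (n : ℕ) (B : Matrix (Fin n) (Fin n) ℝ)
    (hB : ∀ μ ∈ spectrum ℂ (B.map (algebraMap ℝ ℂ)), μ.re < 0) :
    Tendsto (fun t : ℝ => exp (t • B)) atTop (nhds 0) ∧
    ∀ x₀ : Fin n → ℝ,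
      Tendsto (fun t : ℝ => (exp (t • B)).mulVec x₀) atTop (nhds 0) := by
  have part1 : Tendsto (fun t : ℝ => exp (t • B)) atTop (nhds 0) := by
    rcases Nat.eq_zero_or_pos n with hn | hn
    · subst hn
      haveI : Subsingleton (Matrix (Fin 0) (Fin 0) ℝ) :=
        ⟨fun a b => by ext i j; exact i.elim0⟩
      exact tendsto_const_nhds.congr fun t => Subsingleton.elim 0 _
    · set A : Matrix (Fin n) (Fin n) ℂ := B.map (algebraMap ℝ ℂ) with hA
      have hmap : ∀ t : ℝ, (exp (t • B)).map (algebraMap ℝ ℂ) = exp (t • A) := by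
        intro t
        letI : SeminormedRing (Matrix (Fin n) (Fin n) ℝ) := Matrix.linftyOpSemiNormedRing
        letI : NormedRing (Matrix (Fin n) (Fin n) ℝ) := Matrix.linftyOpNormedRing
        letI : NormedAlgebra ℝ (Matrix (Fin n) (Fin n) ℝ) := Matrix.linftyOpNormedAlgebra
        letI : SeminormedRing (Matrix (Fin n) (Fin n) ℂ) := Matrix.linftyOpSemiNormedRing
        letI : NormedRing (Matrix (Fin n) (Fin n) ℂ) := Matrix.linftyOpNormedRing
        letI : NormedAlgebra ℝ (Matrix (Fin n) (Fin n) ℂ) := Matrix.linftyOpNormedAlgebra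
        letI : NormedAlgebra ℚ (Matrix (Fin n) (Fin n) ℝ) := Matrix.linftyOpNormedAlgebra
        have h1 := map_exp ((algebraMap ℝ ℂ).mapMatrix :
            Matrix (Fin n) (Fin n) ℝ →+* Matrix (Fin n) (Fin n) ℂ)
          (by exact continuous_id.matrix_map (continuous_algebraMap ℝ ℂ)) (t • B)
        have h2 : ((algebraMap ℝ ℂ).mapMatrix (t • B) : Matrix (Fin n) (Fin n) ℂ) = t • A := by
          ext i j
          simp [RingHom.mapMatrix_apply, Matrix.map_apply, Matrix.smul_apply, hA,
            Complex.real_smul, Complex.ofReal_mul]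
        calc (exp (t • B)).map (algebraMap ℝ ℂ)
            = (algebraMap ℝ ℂ).mapMatrix (exp (t • B)) := rfl
          _ = exp ((algebraMap ℝ ℂ).mapMatrix (t • B)) := h1
          _ = exp (t • A) := by rw [h2]
          _ = exp (t • A) := rfl
      apply tendsto_pi_nhds.mpr
      intro i
      apply tendsto_pi_nhds.mpr
      intro j
      have hent := aux_complex hn.ne' A hB i j
      have hre := (Complex.continuous_re.tendsto 0).comp hent
      simp only [Function.comp_def, Complex.zero_re] at hre
      refine hre.congr fun t => ?_
      have := congrArg (fun M => (M i j).re) (hmap t)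
      simpa [Matrix.map_apply] using this.symm
  refine ⟨part1, fun x₀ => ?_⟩
  have hc : Continuous fun M : Matrix (Fin n) (Fin n) ℝ => M.mulVec x₀ :=
    continuous_id.matrix_mulVec continuous_const
  have := (hc.tendsto 0).comp part1
  simpa [Function.comp_def, Matrix.zero_mulVec] using this
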